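/- Let J, J_π: X → R with J_π(x) ≥ 0, J(x) ≥ 0 for all x, and suppose there exist η > 0, β > 0 such that J_π(x) + η ≤ (1+β)(J_ε(x) + η) for all x, where J_ε(x) ≥ J(x) and J_ε(x) − J(x) ≤ Lε with η > Lε > 0. Then sup_x (J_π(x) − J(x))/(J(x) + η) ≤ (βη + Lε)/(η − Lε). -/
import Mathlib


/-- Transfer of the relative performance bound from the conservative problem
to the original problem. -/
theorem stmt_16 {X : Type*}
    (J Jε Jπ : X → ℝ) (β η L ε : ℝ)
    (hβ : 0 < β) (hη : 0 < η) (hLε : 0 < L * ε) (hηLε : L * ε < η)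
    (hJnn : ∀ x, 0 ≤ J x) (hJπnn : ∀ x, 0 ≤ Jπ x)
    (hJε : ∀ x, J x ≤ Jε x)
    (hJεgap : ∀ x, Jε x - J x ≤ L * ε)
    (hrel : ∀ x, Jπ x + η ≤ (1 + β) * (Jε x + η)) :
    ∀ x, (Jπ x - J x) / (J x + η) ≤ (β * η + L * ε) / (η - L * ε) := by
  intro x
  have h1 := hJnn x
  have h2 := hJεgap x
  have h3 := hrel x
  have hd1 : 0 < J x + η := by linarith
  have hd2 : 0 < η - L * ε := by linarith
  rw [div_le_div_iff₀ hd1 hd2]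
  nlinarith [mul_nonneg hβ.le (hd1.le), mul_nonneg hLε.le h1,
    mul_nonneg (mul_nonneg hβ.le hLε.le) h1, mul_nonneg hβ.le hLε.le,
    mul_pos hLε hLε, mul_pos hβ (mul_pos hLε hLε),
    mul_nonneg hd2.le (sub_nonneg.2 h2)]
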